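/- Let G be a finite simple graph on n ≥ 2 vertices, let γ ≥ 1 be an integer, let α ≥ 1 and ε > 0 be reals, and suppose that every subgraph J of G with at least two vertices satisfies |E(J)| ≤ α·(|V(J)| − 1). Fix a γ-copy orientation of G in which every oriented copy is 1-valid, and suppose some vertex v satisfies s(v) > (1+ε)·α·γ + log_{1+ε} n. For i ≥ 0 let V_i be the set of vertices reachable from v by a directed path of length at most i, where a step may go from x to y whenever xy is an edge with B_{xy}^x ≥ 1. Then |V_i| ≥ (1+ε)^i for every integer i with 1 ≤ i ≤ log_{1+ε} n. -/

import Mathlib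

/-- Under the hypotheses of Statement 0, if some vertex `v` has load exceeding
`(1+ε) α γ + log_{1+ε} n`, then the set `V_i` of vertices reachable from `v` by directed paths
of length at most `i` (following oriented copies) satisfies `|V_i| ≥ (1+ε)^i` for all
`1 ≤ i ≤ log_{1+ε} n`. -/
lemma count_aux {V : Type*} [Fintype V] [DecidableEq V] (G : SimpleGraph V)
    (γ : ℕ) (B : V → V → ℕ)
    (hB0 : ∀ u v, ¬ G.Adj u v → B u v = 0)
    (hBγ : ∀ u v, G.Adj u v → B u v + B v u = γ)
    (T : Finset V) :
    ∑ w ∈ T, ∑ u ∈ T, B w u = γ * {e : Sym2 V | e ∈ G.edgeSet ∧ ∀ x ∈ e, x ∈ T}.ncard := by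
  classical
  set P : Finset (V × V) := (T ×ˢ T).filter (fun p => G.Adj p.1 p.2) with hP
  set E : Finset (Sym2 V) := P.image Sym2.mk.uncurry with hE
  have h1 : ∑ w ∈ T, ∑ u ∈ T, B w u = ∑ p ∈ P, B p.1 p.2 := by
    rw [← Finset.sum_product']
    refine (Finset.sum_subset (Finset.filter_subset _ _) ?_).symm
    intro p hp hnp
    simp only [hP, Finset.mem_filter, hp, true_and] at hnp
    exact hB0 _ _ hnp
  have h2 : ∑ p ∈ P, B p.1 p.2
      = ∑ e ∈ E, ∑ p ∈ P.filter (fun p => Sym2.mk.uncurry p = e), B p.1 p.2 :=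
    (Finset.sum_fiberwise_of_maps_to (fun p hp => Finset.mem_image_of_mem _ hp) _).symm
  have h3 : ∀ e ∈ E, ∑ p ∈ P.filter (fun p => Sym2.mk.uncurry p = e), B p.1 p.2 = γ := by
    intro e he
    obtain ⟨⟨a, b⟩, hpP, rfl⟩ := Finset.mem_image.1 he
    have hpP' := hpP
    simp only [hP, Finset.mem_filter, Finset.mem_product] at hpP'
    obtain ⟨⟨haT, hbT⟩, hab⟩ := hpP'
    have hne : a ≠ b := G.ne_of_adj hab
    have hfib : P.filter (fun p => Sym2.mk.uncurry p = Sym2.mk.uncurry (a, b)) = {(a,b), (b,a)} := by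
      ext ⟨x, y⟩
      simp only [Finset.mem_filter, hP, Finset.mem_product, Finset.mem_insert,
        Finset.mem_singleton, Prod.mk.injEq]
      constructor
      · rintro ⟨⟨⟨hxT, hyT⟩, hadj⟩, heq⟩
        rcases Sym2.eq_iff.1 heq with ⟨rfl, rfl⟩ | ⟨rfl, rfl⟩
        · left; exact ⟨rfl, rfl⟩
        · right; exact ⟨rfl, rfl⟩
      · rintro (⟨rfl, rfl⟩ | ⟨rfl, rfl⟩)
        · exact ⟨⟨⟨haT, hbT⟩, hab⟩, rfl⟩
        · exact ⟨⟨⟨hbT, haT⟩, hab.symm⟩, Sym2.eq_swap⟩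
    rw [hfib, Finset.sum_pair (by simp [Prod.ext_iff]; intro h; exact absurd h hne)]
    exact hBγ a b hab
  have hset : {e : Sym2 V | e ∈ G.edgeSet ∧ ∀ x ∈ e, x ∈ T} = ↑E := by
    ext e
    induction e using Sym2.ind with
    | _ a b =>
      simp only [Set.mem_setOf_eq, hE, Finset.coe_image, Set.mem_image, Finset.mem_coe]
      constructor
      · rintro ⟨hadj, hmem⟩
        refine ⟨(a, b), ?_, rfl⟩
        simp only [hP, Finset.mem_filter, Finset.mem_product]
        exact ⟨⟨hmem a (Sym2.mem_mk_left a b), hmem b (Sym2.mem_mk_right a b)⟩,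
          (G.mem_edgeSet).1 hadj⟩
      · rintro ⟨⟨x, y⟩, hp, heq⟩
        simp only [hP, Finset.mem_filter, Finset.mem_product] at hp
        rcases Sym2.eq_iff.1 heq with ⟨rfl, rfl⟩ | ⟨rfl, rfl⟩ <;>
          refine ⟨(G.mem_edgeSet).2 ?_, ?_⟩
        · exact hp.2
        · intro z hz
          rcases Sym2.mem_iff.1 hz with rfl | rfl
          exacts [hp.1.1, hp.1.2]
        · exact hp.2.symm
        · intro z hz
          rcases Sym2.mem_iff.1 hz with rfl | rfl
          exacts [hp.1.2, hp.1.1]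
  rw [h1, h2, Finset.sum_congr rfl h3, Finset.sum_const, hset, Set.ncard_coe_finset,
    smul_eq_mul, Nat.mul_comm]

theorem stmt_1 {V : Type*} [Fintype V] [DecidableEq V]
    (G : SimpleGraph V)
    (hn : 2 ≤ Fintype.card V)
    (γ : ℕ) (hγ : 1 ≤ γ)
    (α ε : ℝ) (hα : 1 ≤ α) (hε : 0 < ε)
    (harb : ∀ S : Finset V, 2 ≤ S.card →
      ({e : Sym2 V | e ∈ G.edgeSet ∧ ∀ x ∈ e, x ∈ S}.ncard : ℝ) ≤ α * ((S.card : ℝ) - 1))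
    (B : V → V → ℕ)
    (hB0 : ∀ u v, ¬ G.Adj u v → B u v = 0)
    (hBγ : ∀ u v, G.Adj u v → B u v + B v u = γ)
    (load : V → ℕ) (hload : ∀ v, load v = ∑ u, B v u)
    (hvalid : ∀ u v, G.Adj u v → 1 ≤ B u v → (load u : ℝ) - (load v : ℝ) ≤ 1)
    (v : V)
    (hbig : (1 + ε) * α * γ + Real.logb (1 + ε) (Fintype.card V) < (load v : ℝ)) :
    ∀ i : ℕ, 1 ≤ i → (i : ℝ) ≤ Real.logb (1 + ε) (Fintype.card V) →
      (1 + ε) ^ i ≤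
        (({w : V | ∃ (m : ℕ) (f : ℕ → V), m ≤ i ∧ f 0 = v ∧ f m = w ∧
            ∀ j < m, G.Adj (f j) (f (j + 1)) ∧ 1 ≤ B (f j) (f (j + 1))}).ncard : ℝ) := by
  classical
  set L := Real.logb (1 + ε) (Fintype.card V) with hL
  let R : ℕ → Set V := fun i => {w : V | ∃ (m : ℕ) (f : ℕ → V), m ≤ i ∧ f 0 = v ∧ f m = w ∧
      ∀ j < m, G.Adj (f j) (f (j + 1)) ∧ 1 ≤ B (f j) (f (j + 1))}
  have goalR : ∀ i : ℕ, {w : V | ∃ (m : ℕ) (f : ℕ → V), m ≤ i ∧ f 0 = v ∧ f m = w ∧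
      ∀ j < m, G.Adj (f j) (f (j + 1)) ∧ 1 ≤ B (f j) (f (j + 1))} = R i := fun _ => rfl
  let F : ℕ → Finset V := fun i => (Set.toFinite (R i)).toFinset
  have hcard : ∀ i, (R i).ncard = (F i).card := fun i => Set.ncard_eq_toFinset_card _ _
  have hmemF : ∀ i w, w ∈ F i ↔ w ∈ R i := fun i w => Set.Finite.mem_toFinset _
  -- v is in every R i
  have hvR : ∀ i, v ∈ R i :=
    fun i => ⟨0, fun _ => v, Nat.zero_le _, rfl, rfl, fun j hj => absurd hj (Nat.not_lt_zero j)⟩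
  -- step lemma
  have hstep : ∀ i w u, w ∈ R i → G.Adj w u → 1 ≤ B w u → u ∈ R (i + 1) := by
    intro i w u hw hadj hB
    obtain ⟨m, f, hm, hf0, hfm, hpath⟩ := hw
    refine ⟨m + 1, fun j => if j = m + 1 then u else f j, by omega, ?_, by simp, ?_⟩
    · simp only [Nat.succ_ne_zero]
      have : (0 : ℕ) ≠ m + 1 := by omega
      simp [this, hf0]
    · intro j hj
      rcases Nat.lt_succ_iff_lt_or_eq.1 hj with h | rfl
      · have hj1 : j ≠ m + 1 := by omega
        have hj2 : j + 1 ≠ m + 1 := by omega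
        simpa [hj1, hj2, show j ≠ m by omega] using hpath j h
      · have hj1 : j ≠ j + 1 := by omega
        simpa [hj1, hfm] using ⟨hadj, hB⟩
  -- monotone
  have hmono : ∀ i, R i ⊆ R (i + 1) := by
    rintro i w ⟨m, f, hm, h0, hfm, hp⟩
    exact ⟨m, f, by omega, h0, hfm, hp⟩
  -- load lower bound on R i
  have hloadR : ∀ i, ∀ w ∈ R i, (load v : ℝ) - i ≤ (load w : ℝ) := by
    rintro i w ⟨m, f, hm, h0, hfm, hp⟩
    have key : ∀ j, j ≤ m → (load v : ℝ) - j ≤ (load (f j) : ℝ) := by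
      intro j
      induction j with
      | zero => intro _; simp [h0]
      | succ j ih =>
        intro hj
        have hj' : j < m := by omega
        have h1 := ih (by omega)
        have h2 := hvalid _ _ (hp j hj').1 (hp j hj').2
        push_cast
        push_cast at h1
        linarith
    have := key m le_rfl
    rw [hfm] at this
    have hmi : (m : ℝ) ≤ (i : ℝ) := by exact_mod_cast hm
    linarith
  -- basics for the "big vertex"
  have hε1 : (1 : ℝ) < 1 + ε := by linarith
  have hnR : (1 : ℝ) ≤ (Fintype.card V : ℝ) := by exact_mod_cast le_trans (by norm_num) hn
  have hlogb0 : 0 ≤ L := Real.logb_nonneg hε1 hnR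
  have hγR : (1 : ℝ) ≤ (γ : ℝ) := by exact_mod_cast hγ
  have haγ : (0 : ℝ) < α * γ := by nlinarith
  have hloadv : 1 ≤ load v := by
    by_contra h
    have : load v = 0 := by omega
    rw [this] at hbig
    push_cast at hbig
    nlinarith
  -- there is a neighbor u0 with B v u0 ≥ 1
  obtain ⟨u0, hu0⟩ : ∃ u, B v u ≠ 0 := by
    by_contra h
    push_neg at h
    have : load v = 0 := by rw [hload]; exact Finset.sum_eq_zero fun u _ => h u
    omega
  have hadj0 : G.Adj v u0 := by
    by_contra h
    exact hu0 (hB0 v u0 h)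
  -- card (F (i+1)) ≥ 2
  have hT2 : ∀ i : ℕ, 2 ≤ (F (i + 1)).card := by
    intro i
    have h1 : v ∈ F (i + 1) := (hmemF _ _).2 (hvR _)
    have h2 : u0 ∈ F (i + 1) := (hmemF _ _).2 (hstep i v u0 (hvR i) hadj0 (by omega))
    exact Finset.one_lt_card.2 ⟨v, h1, u0, h2, G.ne_of_adj hadj0⟩
  have hF1 : ∀ i, 1 ≤ (F i).card := by
    intro i
    exact Finset.card_pos.2 ⟨v, (hmemF _ _).2 (hvR i)⟩
  -- counting identity
  have hcount : ∀ T : Finset V,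
      ∑ w ∈ T, ∑ u ∈ T, B w u
        = γ * {e : Sym2 V | e ∈ G.edgeSet ∧ ∀ x ∈ e, x ∈ T}.ncard := by
    intro T
    exact count_aux G γ B hB0 hBγ T
  -- key growth inequality
  have hkey : ∀ i : ℕ, (i : ℝ) ≤ L → (1 + ε) * (F i).card ≤ ((F (i + 1)).card : ℝ) := by
    intro i hi
    set S := F i
    set T := F (i + 1)
    have hST : S ⊆ T := by
      intro w hw
      exact (hmemF _ _).2 (hmono i ((hmemF _ _).1 hw))
    -- per-vertex load bound
    have hA : ((S.card : ℝ)) * ((load v : ℝ) - i) ≤ ∑ w ∈ S, (load w : ℝ) := by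
      have := Finset.card_nsmul_le_sum S (fun w => (load w : ℝ)) ((load v : ℝ) - i)
        (fun w hw => hloadR i w ((hmemF _ _).1 hw))
      simpa [nsmul_eq_mul] using this
    -- Nat inequality: sum of loads on S ≤ double count over T
    have hNat : ∑ w ∈ S, load w ≤ ∑ w ∈ T, ∑ u ∈ T, B w u := by
      have hrow : ∀ w ∈ S, load w = ∑ u ∈ T, B w u := by
        intro w hw
        rw [hload]
        refine (Finset.sum_subset (Finset.subset_univ T) ?_).symm
        intro u _ huT
        by_contra hBne
        have hB1 : 1 ≤ B w u := Nat.one_le_iff_ne_zero.2 hBne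
        have hadj : G.Adj w u := by
          by_contra h
          exact hBne (hB0 w u h)
        exact huT ((hmemF _ _).2 (hstep i w u ((hmemF _ _).1 hw) hadj hB1))
      calc ∑ w ∈ S, load w = ∑ w ∈ S, ∑ u ∈ T, B w u := Finset.sum_congr rfl hrow
        _ ≤ ∑ w ∈ T, ∑ u ∈ T, B w u :=
            Finset.sum_le_sum_of_subset_of_nonneg hST (fun _ _ _ => Nat.zero_le _)
    have harbT := harb T (hT2 i)
    have hchain : ((S.card : ℝ)) * ((load v : ℝ) - i)
        ≤ (γ : ℝ) * (α * ((T.card : ℝ) - 1)) := by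
      have h1 : (∑ w ∈ S, (load w : ℝ)) = ((∑ w ∈ S, load w : ℕ) : ℝ) := by push_cast; ring
      have h2 : ((∑ w ∈ S, load w : ℕ) : ℝ) ≤ ((∑ w ∈ T, ∑ u ∈ T, B w u : ℕ) : ℝ) := by
        exact_mod_cast hNat
      have h3 : ((∑ w ∈ T, ∑ u ∈ T, B w u : ℕ) : ℝ)
          = (γ : ℝ) * ({e : Sym2 V | e ∈ G.edgeSet ∧ ∀ x ∈ e, x ∈ T}.ncard : ℝ) := by
        rw [hcount T]; push_cast; ring
      have h4 : (γ : ℝ) * ({e : Sym2 V | e ∈ G.edgeSet ∧ ∀ x ∈ e, x ∈ T}.ncard : ℝ)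
          ≤ (γ : ℝ) * (α * ((T.card : ℝ) - 1)) := by
        apply mul_le_mul_of_nonneg_left harbT (by positivity)
      linarith [hA, h1 ▸ hA]
    have h6 : (1 + ε) * α * γ ≤ (load v : ℝ) - i := by
      rw [hL] at hbig
      linarith
    have hS1 : (1 : ℝ) ≤ (S.card : ℝ) := by exact_mod_cast hF1 i
    have hmul : (1 + ε) * (S.card : ℝ) * (α * γ) ≤ (((T.card : ℝ)) - 1) * (α * γ) := by
      have : (S.card : ℝ) * ((1 + ε) * α * γ) ≤ (S.card : ℝ) * ((load v : ℝ) - i) :=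
        mul_le_mul_of_nonneg_left h6 (by linarith)
      nlinarith [hchain]
    have := le_of_mul_le_mul_right hmul haγ
    linarith
  -- main induction
  have hmain : ∀ i : ℕ, (i : ℝ) ≤ L → (1 + ε) ^ i ≤ ((F i).card : ℝ) := by
    intro i
    induction i with
    | zero =>
      intro _
      simpa using (by exact_mod_cast hF1 0 : (1 : ℝ) ≤ (F 0).card)
    | succ i ih =>
      intro hi
      have hi' : (i : ℝ) ≤ L := le_trans (by push_cast; linarith) hi
      calc (1 + ε) ^ (i + 1) = (1 + ε) * (1 + ε) ^ i := by ring
        _ ≤ (1 + ε) * (F i).card := by nlinarith [ih hi']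
        _ ≤ ((F (i + 1)).card : ℝ) := hkey i hi'
  intro i _ hi2
  rw [goalR i, hcard i]
  exact hmain i hi2
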